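/- (Multidimensional Alexandrov–Heinz theorem.) Let d ≥ 2 and let k be a natural number with 1 ≤ k and 2k ≤ d. Let B be the open unit ball of ℝ^d and let h : closure(B) → ℝ be continuous and convex. Assume there is c₀ > 0 such that L(∂h(ω)) ≥ c₀·L(ω) for every Borel set ω ⊆ B, the subdifferentials being taken with respect to B. Let 0 < r < 1 and suppose that h(x) = 0 for every x ∈ ℝ^d with ‖x‖ = r and x_i = 0 for all i ∈ {d−k+1, …, d} (that is, h vanishes on the boundary sphere of the (d−k)-dimensional ball of radius r centered at the origin in the coordinate subspace where the last k coordinates vanish). Then h(0) < 0. In particular, a convex function whose Monge–Ampère measure is bounded below by a positive multiple of Lebesgue measure cannot be affine on any (d−k)-dimensional ball with k ≤ d/2. -/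

import Mathlib

open scoped RealInnerProductSpace
open MeasureTheory

/-- The subdifferential of `f : O → ℝ` at `x`:
`∂f(x) = {p : f y ≥ f x + ⟨p, y − x⟩ for all y ∈ O}`. -/
def subdiff {d : ℕ} (O : Set (EuclideanSpace ℝ (Fin d)))
    (f : EuclideanSpace ℝ (Fin d) → ℝ) (x : EuclideanSpace ℝ (Fin d)) :
    Set (EuclideanSpace ℝ (Fin d)) :=
  {p | ∀ y ∈ O, f x + ⟪p, y - x⟫ ≤ f y}

/-- `∂f(ω) = ⋃_{x ∈ ω} ∂f(x)`; its Lebesgue measure is the Monge–Ampère measure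
`MA(f)(ω)`. -/
def subdiffSet {d : ℕ} (O : Set (EuclideanSpace ℝ (Fin d)))
    (f : EuclideanSpace ℝ (Fin d) → ℝ) (ω : Set (EuclideanSpace ℝ (Fin d))) :
    Set (EuclideanSpace ℝ (Fin d)) :=
  ⋃ x ∈ ω, subdiff O f x

variable {d m : ℕ}

open MeasureTheory

lemma card_subtype_fin_lt (d m : ℕ) (hm : m ≤ d) :
    Fintype.card {i : Fin d // (i : ℕ) < m} = m := by
  have : Fintype.card {i : Fin d // (i : ℕ) < m} = Fintype.card (Fin m) := by
    apply Fintype.card_congr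
    exact { toFun := fun i => ⟨(i : ℕ), i.2⟩
            invFun := fun j => ⟨⟨(j : ℕ), lt_of_lt_of_le j.2 hm⟩, j.2⟩
            left_inv := fun i => by ext; rfl
            right_inv := fun j => by ext; rfl }
  simpa using this

lemma volume_coordBox (d : ℕ) (g : Fin d → ℝ) :
    volume {x : EuclideanSpace ℝ (Fin d) | ∀ i, x i ∈ Set.Icc (-(g i)) (g i)}
      = ∏ i, ENNReal.ofReal (2 * g i) := by
  have hEq : {x : EuclideanSpace ℝ (Fin d) | ∀ i, x i ∈ Set.Icc (-(g i)) (g i)}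
      = (MeasurableEquiv.toLp 2 (Fin d → ℝ)).symm ⁻¹'
        (Set.univ.pi (fun i => Set.Icc (-(g i)) (g i))) := by
    ext x
    simp only [Set.mem_setOf_eq, Set.mem_preimage, Set.mem_pi, Set.mem_univ, forall_true_left]
    exact Iff.rfl
  rw [hEq, (EuclideanSpace.volume_preserving_symm_measurableEquiv_toLp (Fin d)).measure_preimage
    (MeasurableSet.univ_pi (fun i => measurableSet_Icc)).nullMeasurableSet,
    volume_pi_pi]
  refine Finset.prod_congr rfl (fun i _ => ?_)
  rw [Real.volume_Icc]
  ring_nf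

lemma volume_le_box_mul (d m : ℕ) (b : ℝ)
    (Q : Set ({i : Fin d // ¬ ((i : ℕ) < m)} → ℝ)) (hQ : MeasurableSet Q) :
    volume {x : EuclideanSpace ℝ (Fin d) |
        (∀ i : Fin d, (i : ℕ) < m → |x i| ≤ b) ∧
        (fun j : {i : Fin d // ¬ ((i : ℕ) < m)} => x j.val) ∈ Q}
      ≤ (ENNReal.ofReal (2 * b)) ^ (Fintype.card {i : Fin d // (i : ℕ) < m})
          * volume Q := by
  have hEq : {x : EuclideanSpace ℝ (Fin d) |
        (∀ i : Fin d, (i : ℕ) < m → |x i| ≤ b) ∧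
        (fun j : {i : Fin d // ¬ ((i : ℕ) < m)} => x j.val) ∈ Q}
      = (MeasurableEquiv.toLp 2 (Fin d → ℝ)).symm ⁻¹'
        ((MeasurableEquiv.piEquivPiSubtypeProd (fun _ : Fin d => ℝ) (fun i => (i : ℕ) < m)) ⁻¹'
          ((Set.univ.pi (fun _ => Set.Icc (-b) b)) ×ˢ Q)) := by
    ext x
    simp only [Set.mem_setOf_eq, Set.mem_preimage, MeasurableEquiv.piEquivPiSubtypeProd,
      MeasurableEquiv.coe_mk, Equiv.piEquivPiSubtypeProd_apply, Set.mem_prod, Set.mem_pi,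
      Set.mem_univ, forall_true_left, Set.mem_Icc]
    constructor
    · rintro ⟨h1, h2⟩
      exact ⟨fun j => abs_le.mp (h1 j.val j.2), h2⟩
    · rintro ⟨h1, h2⟩
      exact ⟨fun i hi => abs_le.mpr (h1 ⟨i, hi⟩), h2⟩
  rw [hEq]
  rw [(EuclideanSpace.volume_preserving_symm_measurableEquiv_toLp (Fin d)).measure_preimage]
  · rw [(volume_preserving_piEquivPiSubtypeProd (fun _ : Fin d => ℝ)
      (fun i => (i : ℕ) < m)).measure_preimage]
    · rw [Measure.volume_eq_prod, Measure.prod_prod, volume_pi_pi]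
      have hbox : (∏ _i : {i : Fin d // (i : ℕ) < m}, volume (Set.Icc (-b) b))
          = (ENNReal.ofReal (2 * b)) ^ (Fintype.card {i : Fin d // (i : ℕ) < m}) := by
        rw [Finset.prod_const]
        congr 1
        rw [Real.volume_Icc]
        ring_nf
      rw [hbox]
    · exact ((MeasurableSet.univ_pi (fun i => measurableSet_Icc)).prod hQ).nullMeasurableSet
  · apply MeasurableSet.nullMeasurableSet
    exact (MeasurableEquiv.piEquivPiSubtypeProd (fun _ : Fin d => ℝ)
      (fun i => (i : ℕ) < m)).measurable
      (((MeasurableSet.univ_pi (fun i => measurableSet_Icc)).prod hQ))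
variable {d : ℕ}

lemma inner_sum_euclid (x y : EuclideanSpace ℝ (Fin d)) : ⟪x, y⟫ = ∑ i, x i * y i := by
  rw [PiLp.inner_apply]
  simp [RCLike.inner_apply, mul_comm]

lemma coord_le_norm (x : EuclideanSpace ℝ (Fin d)) (i : Fin d) : |x i| ≤ ‖x‖ := by
  rw [EuclideanSpace.norm_eq]
  have h1 : |x i| = Real.sqrt (‖x i‖^2) := by
    rw [Real.sqrt_sq_eq_abs, Real.norm_eq_abs, abs_abs]
  rw [h1]
  apply Real.sqrt_le_sqrt
  exact Finset.single_le_sum (f := fun j => ‖x j‖^2) (fun j _ => sq_nonneg _) (Finset.mem_univ i)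

lemma norm_le_card_mul (x : EuclideanSpace ℝ (Fin d)) (c : ℝ) (hc : 0 ≤ c)
    (h : ∀ i, |x i| ≤ c) : ‖x‖ ≤ Real.sqrt d * c := by
  rw [EuclideanSpace.norm_eq]
  have hsum : ∑ i, ‖x i‖^2 ≤ (d : ℝ) * c^2 := by
    calc ∑ i, ‖x i‖^2 ≤ ∑ _i : Fin d, c^2 := by
          apply Finset.sum_le_sum
          intro i _
          have h2 : ‖x i‖ ≤ c := by rw [Real.norm_eq_abs]; exact h i
          exact pow_le_pow_left₀ (norm_nonneg _) h2 2
      _ = (d : ℝ) * c^2 := by simp [Finset.sum_const, mul_comm]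
  calc Real.sqrt (∑ i, ‖x i‖^2) ≤ Real.sqrt ((d:ℝ) * c^2) := Real.sqrt_le_sqrt hsum
    _ = Real.sqrt d * c := by
        rw [Real.sqrt_mul (by positivity), Real.sqrt_sq hc]

lemma exists_subgradient_at_zero (f : EuclideanSpace ℝ (Fin d) → ℝ)
    (hconv : ConvexOn ℝ (Metric.closedBall 0 1) f)
    (hcont : ContinuousOn f (Metric.closedBall (0 : EuclideanSpace ℝ (Fin d)) 1)) :
    ∃ p : EuclideanSpace ℝ (Fin d), ∀ y ∈ Metric.ball (0 : EuclideanSpace ℝ (Fin d)) 1,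
      f 0 + ⟪p, y⟫ ≤ f y := by
  classical
  set C : Set ((EuclideanSpace ℝ (Fin d)) × ℝ) :=
    {z | z.1 ∈ Metric.ball (0 : EuclideanSpace ℝ (Fin d)) 1 ∧ f z.1 < z.2} with hC
  have hball_sub : Metric.ball (0 : EuclideanSpace ℝ (Fin d)) 1 ⊆
      Metric.closedBall (0 : EuclideanSpace ℝ (Fin d)) 1 := Metric.ball_subset_closedBall
  have hCconv : Convex ℝ C := by
    rintro ⟨y₁, t₁⟩ ⟨hy₁, ht₁⟩ ⟨y₂, t₂⟩ ⟨hy₂, ht₂⟩ a b ha hb hab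
    constructor
    · exact (convex_ball (0 : EuclideanSpace ℝ (Fin d)) 1) hy₁ hy₂ ha hb hab
    · have h1 : f (a • y₁ + b • y₂) ≤ a * f y₁ + b * f y₂ := by
        simpa [smul_eq_mul] using hconv.2 (hball_sub hy₁) (hball_sub hy₂) ha hb hab
      have h2 : a * f y₁ + b * f y₂ < a * t₁ + b * t₂ := by
        rcases eq_or_lt_of_le ha with ha0 | ha0
        · have hb1 : b = 1 := by linarith
          simp only [← ha0, hb1]
          simpa using ht₂
        · rcases eq_or_lt_of_le hb with hb0 | hb0
          · have ha1 : a = 1 := by linarith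
            simp only [← hb0, ha1]
            simpa using ht₁
          · have l1 := mul_lt_mul_of_pos_left ht₁ ha0
            have l2 := mul_lt_mul_of_pos_left ht₂ hb0
            linarith
      exact lt_of_le_of_lt h1 h2
  have hCopen : IsOpen C := by
    rw [isOpen_iff_mem_nhds]
    rintro ⟨y, t⟩ ⟨hy, hyt⟩
    have hcy : ContinuousAt f y :=
      (hcont.mono hball_sub).continuousAt (Metric.isOpen_ball.mem_nhds hy)
    have hg : ContinuousAt (fun z : (EuclideanSpace ℝ (Fin d)) × ℝ => f z.1 - z.2) (y, t) :=
      (hcy.comp continuousAt_fst).sub continuousAt_snd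
    have h1 : {z : (EuclideanSpace ℝ (Fin d)) × ℝ | f z.1 - z.2 < 0} ∈ nhds (y, t) := by
      have hmem : Set.Iio (0:ℝ) ∈ nhds (f y - t) := Iio_mem_nhds (by simp at hyt ⊢; linarith)
      exact hg hmem
    have h2 : (Metric.ball (0 : EuclideanSpace ℝ (Fin d)) 1 ×ˢ (Set.univ : Set ℝ)) ∈
        nhds (y, t) := (Metric.isOpen_ball.prod isOpen_univ).mem_nhds ⟨hy, trivial⟩
    filter_upwards [h1, h2] with z hz1 hz2
    exact ⟨hz2.1, by simpa using sub_neg.mp hz1⟩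
  have hnot : ((0 : EuclideanSpace ℝ (Fin d)), f 0) ∉ C := by
    rintro ⟨-, h2⟩
    exact lt_irrefl _ h2
  obtain ⟨Λ, hΛ⟩ := geometric_hahn_banach_open_point hCconv hCopen hnot
  set β : ℝ := Λ ((0 : EuclideanSpace ℝ (Fin d)), (1:ℝ)) with hβ
  have hz1 : ((0 : EuclideanSpace ℝ (Fin d)), f 0 + 1) ∈ C :=
    ⟨Metric.mem_ball_self one_pos, by norm_num⟩
  have hβneg : β < 0 := by
    have h3 := hΛ _ hz1
    have hsplit : ((0 : EuclideanSpace ℝ (Fin d)), f 0 + 1)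
        = ((0 : EuclideanSpace ℝ (Fin d)), f 0) + ((0 : EuclideanSpace ℝ (Fin d)), (1:ℝ)) := by
      simp
    rw [hsplit, map_add] at h3
    rw [hβ]
    linarith
  have hkey : ∀ y ∈ Metric.ball (0 : EuclideanSpace ℝ (Fin d)) 1,
      Λ (y, f y) ≤ Λ ((0 : EuclideanSpace ℝ (Fin d)), f 0) := by
    intro y hy
    have h3 : ∀ s : ℝ, 0 < s →
        Λ (y, f y) + s * β < Λ ((0 : EuclideanSpace ℝ (Fin d)), f 0) := by
      intro s hs
      have hz : (y, f y + s) ∈ C := ⟨hy, show f y < f y + s by linarith⟩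
      have h4 := hΛ _ hz
      have hsplit : (y, f y + s) = (y, f y) + s • ((0 : EuclideanSpace ℝ (Fin d)), (1:ℝ)) := by
        simp [Prod.ext_iff]
      rw [hsplit, map_add, _root_.map_smul] at h4
      rw [hβ]
      simpa [smul_eq_mul] using h4
    by_contra hcontra
    push_neg at hcontra
    set D : ℝ := Λ (y, f y) - Λ ((0 : EuclideanSpace ℝ (Fin d)), f 0) with hD
    have hDpos : 0 < D := by rw [hD]; linarith
    have h5 := h3 (D / (-β)) (div_pos hDpos (by linarith))
    have hsb : (D / (-β)) * β = -D := by
      have hβne : -β ≠ 0 := by linarith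
      field_simp
      rw [div_self (by linarith : β ≠ 0)]
    rw [hsb] at h5
    rw [hD] at h5
    linarith
  have hdecomp : ∀ (y : EuclideanSpace ℝ (Fin d)) (t : ℝ), Λ (y, t) = Λ (y, 0) + t * β := by
    intro y t
    have hsplit : (y, t) = (y, (0:ℝ)) + t • ((0 : EuclideanSpace ℝ (Fin d)), (1:ℝ)) := by
      simp [Prod.ext_iff]
    rw [hsplit, map_add, _root_.map_smul, hβ, smul_eq_mul]
  set L : (EuclideanSpace ℝ (Fin d)) →L[ℝ] ℝ :=
    ((-β)⁻¹) • (Λ.comp (ContinuousLinearMap.inl ℝ (EuclideanSpace ℝ (Fin d)) ℝ)) with hL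
  obtain ⟨p, hp⟩ : ∃ p : EuclideanSpace ℝ (Fin d), ∀ y, ⟪p, y⟫ = L y := by
    refine ⟨(InnerProductSpace.toDual ℝ (EuclideanSpace ℝ (Fin d))).symm L, fun y => ?_⟩
    simp [InnerProductSpace.toDual_symm_apply]
  refine ⟨p, fun y hy => ?_⟩
  have h4 := hkey y hy
  rw [hdecomp y (f y), hdecomp 0 (f 0)] at h4
  have hΛ0 : Λ ((0 : EuclideanSpace ℝ (Fin d)), (0:ℝ)) = 0 := by
    have h0 : ((0 : EuclideanSpace ℝ (Fin d)), (0:ℝ))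
        = (0 : (EuclideanSpace ℝ (Fin d)) × ℝ) := by simp
    rw [h0, map_zero]
  rw [hΛ0] at h4
  have h5 : Λ (y, 0) ≤ (f y - f 0) * (-β) := by nlinarith
  have hLy : L y = ((-β)⁻¹) * Λ (y, 0) := by
    simp [hL, ContinuousLinearMap.smul_apply, ContinuousLinearMap.comp_apply]
  have hβpos : (0:ℝ) < -β := by linarith
  have h6 : ⟪p, y⟫ ≤ f y - f 0 := by
    rw [hp y, hLy, inv_mul_le_iff₀ hβpos]
    calc Λ (y, 0) ≤ (f y - f 0) * (-β) := h5
      _ = -β * (f y - f 0) := by ring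
  linarith
variable {d m : ℕ}

/-- perpendicular part: zero out the first `m` coordinates -/
def eperp (m : ℕ) (x : EuclideanSpace ℝ (Fin d)) : EuclideanSpace ℝ (Fin d) :=
  WithLp.toLp 2 (fun i => if (i : ℕ) < m then (0:ℝ) else x i)

/-- flat part: keep the first `m` coordinates -/
def eflat (m : ℕ) (x : EuclideanSpace ℝ (Fin d)) : EuclideanSpace ℝ (Fin d) :=
  WithLp.toLp 2 (fun i => if (i : ℕ) < m then x i else (0:ℝ))

/-- pairing of a perp-coordinates vector with a full vector -/
def pairP (m : ℕ) (q : {i : Fin d // ¬ ((i : ℕ) < m)} → ℝ)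
    (y : EuclideanSpace ℝ (Fin d)) : ℝ :=
  ∑ j, q j * y j.val

/-- restriction to perp coordinates -/
def restr (m : ℕ) (p : EuclideanSpace ℝ (Fin d)) : {i : Fin d // ¬ ((i : ℕ) < m)} → ℝ :=
  fun j => p j.val

lemma eflat_apply (x : EuclideanSpace ℝ (Fin d)) (i : Fin d) :
    eflat m x i = if (i : ℕ) < m then x i else 0 := rfl

lemma eperp_apply (x : EuclideanSpace ℝ (Fin d)) (i : Fin d) :
    eperp m x i = if (i : ℕ) < m then 0 else x i := rfl

lemma eflat_add_eperp (x : EuclideanSpace ℝ (Fin d)) : eflat m x + eperp m x = x := by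
  ext i
  simp only [PiLp.add_apply, eflat_apply, eperp_apply]
  by_cases h : (i : ℕ) < m <;> simp [h]

lemma inner_sum_euclid' (x y : EuclideanSpace ℝ (Fin d)) : ⟪x, y⟫ = ∑ i, x i * y i := by
  rw [PiLp.inner_apply]
  simp [RCLike.inner_apply, mul_comm]

lemma inner_eperp_eq_pairP (p x : EuclideanSpace ℝ (Fin d)) :
    ⟪p, eperp m x⟫ = pairP m (restr m p) x := by
  rw [inner_sum_euclid']
  rw [← Fintype.sum_subtype_add_sum_subtype (fun i : Fin d => (i : ℕ) < m)
    (fun i => p i * eperp m x i)]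
  have h1 : ∑ j : {i : Fin d // (i : ℕ) < m}, p j.val * eperp m x j.val = 0 := by
    apply Finset.sum_eq_zero
    intro j _
    simp [eperp_apply, j.2]
  have h2 : ∀ j : {i : Fin d // ¬ ((i : ℕ) < m)}, p j.val * eperp m x j.val
      = restr m p j * x j.val := by
    intro j
    simp [eperp_apply, restr, j.2]
  rw [h1, zero_add]
  exact Finset.sum_congr rfl (fun j _ => h2 j)

lemma pairP_eq_inner (p y : EuclideanSpace ℝ (Fin d)) (hp : ∀ i : Fin d, (i : ℕ) < m → p i = 0) :
    pairP m (restr m p) y = ⟪p, y⟫ := by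
  rw [inner_sum_euclid']
  rw [← Fintype.sum_subtype_add_sum_subtype (fun i : Fin d => (i : ℕ) < m)
    (fun i => p i * y i)]
  have h1 : ∑ j : {i : Fin d // (i : ℕ) < m}, p j.val * y j.val = 0 := by
    apply Finset.sum_eq_zero
    intro j _
    simp [hp j.val j.2]
  rw [h1, zero_add]
  rfl

lemma restr_eperp (x : EuclideanSpace ℝ (Fin d)) : restr m (eperp m x) = restr m x := by
  funext j
  simp [restr, eperp_apply, j.2]

lemma eperp_eperp (x : EuclideanSpace ℝ (Fin d)) : eperp m (eperp m x) = eperp m x := by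
  ext i
  by_cases h : (i : ℕ) < m <;> simp [eperp_apply, h]

lemma pairP_add (q q' : {i : Fin d // ¬ ((i : ℕ) < m)} → ℝ) (y : EuclideanSpace ℝ (Fin d)) :
    pairP m (q + q') y = pairP m q y + pairP m q' y := by
  unfold pairP
  rw [← Finset.sum_add_distrib]
  exact Finset.sum_congr rfl (fun j _ => by simp [add_mul])
open scoped RealInnerProductSpace
open MeasureTheory

def cbox (d : ℕ) (g : Fin d → ℝ) : Set (EuclideanSpace ℝ (Fin d)) :=
  {x | ∀ i, x i ∈ Set.Icc (-(g i)) (g i)}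

def gfun (d m : ℕ) (a t : ℝ) : Fin d → ℝ := fun i => if (i : ℕ) < m then a else t

lemma cbox_measurable (d : ℕ) (g : Fin d → ℝ) : MeasurableSet (cbox d g) := by
  have : cbox d g = ⋂ i, (fun x : EuclideanSpace ℝ (Fin d) => x i) ⁻¹'
      (Set.Icc (-(g i)) (g i)) := by
    ext x; simp [cbox, Set.mem_iInter]
  rw [this]
  apply MeasurableSet.iInter
  intro i
  have hmeas : Measurable (fun x : EuclideanSpace ℝ (Fin d) => x i) :=
    (measurable_pi_apply i).comp (MeasurableEquiv.toLp 2 (Fin d → ℝ)).symm.measurable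
  exact hmeas measurableSet_Icc

lemma card_filter_lt (d m : ℕ) (hm : m ≤ d) :
    (Finset.univ.filter (fun i : Fin d => (i : ℕ) < m)).card = m := by
  have h := (Fintype.card_subtype (fun i : Fin d => (i : ℕ) < m)).symm
  rw [h, card_subtype_fin_lt d m hm]

lemma card_filter_not_lt (d m k : ℕ) (hmd : m + k = d) :
    (Finset.univ.filter (fun i : Fin d => ¬ ((i : ℕ) < m))).card = k := by
  have h1 := Finset.card_filter_add_card_filter_not
    (s := (Finset.univ : Finset (Fin d))) (p := fun i : Fin d => (i : ℕ) < m)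
  rw [card_filter_lt d m (by omega)] at h1
  simp only [Finset.card_univ, Fintype.card_fin] at h1
  omega

lemma cbox_volume (d m k : ℕ) (hmd : m + k = d) (a t : ℝ) :
    volume (cbox d (gfun d m a t))
      = (ENNReal.ofReal (2*a))^m * (ENNReal.ofReal (2*t))^k := by
  rw [show cbox d (gfun d m a t)
      = {x : EuclideanSpace ℝ (Fin d) | ∀ i, x i ∈ Set.Icc (-(gfun d m a t i)) (gfun d m a t i)}
      from rfl]
  rw [volume_coordBox d (gfun d m a t)]
  rw [← Finset.prod_filter_mul_prod_filter_not Finset.univ (fun i : Fin d => (i : ℕ) < m)]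
  have h1 : ∀ i ∈ Finset.univ.filter (fun i : Fin d => (i : ℕ) < m),
      ENNReal.ofReal (2 * gfun d m a t i) = ENNReal.ofReal (2*a) := by
    intro i hi
    simp only [Finset.mem_filter] at hi
    simp [gfun, hi.2]
  have h2 : ∀ i ∈ Finset.univ.filter (fun i : Fin d => ¬ ((i : ℕ) < m)),
      ENNReal.ofReal (2 * gfun d m a t i) = ENNReal.ofReal (2*t) := by
    intro i hi
    simp only [Finset.mem_filter] at hi
    simp [gfun, hi.2]
  rw [Finset.prod_congr rfl h1, Finset.prod_congr rfl h2,
    Finset.prod_const, Finset.prod_const, card_filter_lt d m (by omega),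
    card_filter_not_lt d m k hmd]

lemma sigma_volume (d m k : ℕ) (hmd : m + k = d) (a ε : ℝ) (ha : 0 ≤ a) (hε : 0 ≤ ε) :
    volume (cbox d (gfun d m a ε) \ cbox d (gfun d m a (ε/2)))
      = ENNReal.ofReal ((2*a)^m * ((2*ε)^k - ε^k)) := by
  have hsub : cbox d (gfun d m a (ε/2)) ⊆ cbox d (gfun d m a ε) := by
    intro x hx i
    have := hx i
    simp only [Set.mem_Icc, gfun] at this ⊢
    by_cases h : (i : ℕ) < m
    · simpa [h] using this
    · simp only [h, if_false] at this ⊢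
      constructor <;> [linarith [this.1]; linarith [this.2]]
  rw [measure_diff hsub (cbox_measurable d _).nullMeasurableSet]
  · rw [cbox_volume d m k hmd, cbox_volume d m k hmd]
    rw [← ENNReal.ofReal_pow (by linarith), ← ENNReal.ofReal_pow (by linarith),
      ← ENNReal.ofReal_pow (by linarith), ← ENNReal.ofReal_mul (by positivity),
      ← ENNReal.ofReal_mul (by positivity)]
    rw [← ENNReal.ofReal_sub _ (by positivity)]
    congr 1
    have : 2 * (ε/2) = ε := by ring
    rw [this]
    ring
  · rw [cbox_volume d m k hmd]
    exact ENNReal.mul_ne_top (ENNReal.pow_ne_top ENNReal.ofReal_ne_top)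
      (ENNReal.pow_ne_top ENNReal.ofReal_ne_top)

lemma box_subset_closedBall (d m : ℕ) (hd : 1 ≤ d) (r t : ℝ) (hr0 : 0 < r) (hr1 : r ≤ 1)
    (ht0 : 0 ≤ t) (ht1 : t ≤ 1/(2*d)) :
    cbox d (gfun d m (r/(4*d)) t) ⊆ Metric.closedBall 0 (3/4) := by
  intro x hx
  rw [Metric.mem_closedBall, dist_zero_right]
  have hdpos : (0:ℝ) < d := by exact_mod_cast hd
  have hcoord : ∀ i : Fin d, |x i| ≤ (r+2)/(4*d) := by
    intro i
    have h := hx i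
    simp only [Set.mem_Icc, gfun] at h
    by_cases hi : (i : ℕ) < m
    · simp only [hi, if_true] at h
      rw [abs_le]
      constructor
      · refine le_trans ?_ h.1
        rw [neg_le_neg_iff]
        rw [div_le_div_iff₀ (by positivity) (by positivity)]
        nlinarith
      · refine le_trans h.2 ?_
        rw [div_le_div_iff₀ (by positivity) (by positivity)]
        nlinarith
    · simp only [hi, if_false] at h
      rw [abs_le]
      have h2 : t ≤ (r+2)/(4*d) := by
        refine le_trans ht1 ?_
        rw [div_le_div_iff₀ (by positivity) (by positivity)]
        nlinarith
      exact ⟨by linarith [h.1], by linarith [h.2]⟩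
  have hnorm := norm_le_card_mul x ((r+2)/(4*d)) (by positivity) hcoord
  have hsd : Real.sqrt d ≤ d := by
    have hd1 : (1:ℝ) ≤ d := by exact_mod_cast hd
    have h1 : (d:ℝ) ≤ (d:ℝ) * d := by nlinarith
    calc Real.sqrt d ≤ Real.sqrt ((d:ℝ) * d) := Real.sqrt_le_sqrt h1
      _ = d := Real.sqrt_mul_self (le_of_lt hdpos)
  calc ‖x‖ ≤ Real.sqrt d * ((r+2)/(4*d)) := hnorm
    _ ≤ (d:ℝ) * ((r+2)/(4*d)) := by
        apply mul_le_mul_of_nonneg_right hsd (by positivity)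
    _ = (r+2)/4 := by field_simp
    _ ≤ 3/4 := by linarith

lemma subgrad_norm_le (d : ℕ) (v : EuclideanSpace ℝ (Fin d) → ℝ) (M₀ : ℝ) (hM₀ : 0 ≤ M₀)
    (hbound : ∀ y ∈ Metric.closedBall (0 : EuclideanSpace ℝ (Fin d)) 1, v y ≤ M₀)
    (hnonneg : ∀ y ∈ Metric.closedBall (0 : EuclideanSpace ℝ (Fin d)) 1, 0 ≤ v y)
    (x : EuclideanSpace ℝ (Fin d)) (hx : ‖x‖ ≤ 3/4)
    (p : EuclideanSpace ℝ (Fin d))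
    (hp : p ∈ subdiff (Metric.ball (0:EuclideanSpace ℝ (Fin d)) 1) v x) : ‖p‖ ≤ 8 * M₀ := by
  rcases eq_or_ne p 0 with h0 | h0
  · rw [h0]; simp; linarith
  · have hpn : 0 < ‖p‖ := norm_pos_iff.mpr h0
    set c : ℝ := (8:ℝ)⁻¹ * ‖p‖⁻¹ with hc
    set y := x + c • p with hy
    have hyx : ‖y - x‖ = 1/8 := by
      rw [hy]
      simp only [add_sub_cancel_left]
      rw [norm_smul, hc, Real.norm_eq_abs, abs_of_pos (by positivity)]
      field_simp
      try ring
    have hynorm : ‖y‖ ≤ 3/4 + 1/8 := by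
      calc ‖y‖ = ‖x + (y - x)‖ := by rw [add_sub_cancel]
        _ ≤ ‖x‖ + ‖y - x‖ := norm_add_le _ _
        _ ≤ 3/4 + 1/8 := by rw [hyx]; linarith
    have hymem : y ∈ Metric.ball (0:EuclideanSpace ℝ (Fin d)) 1 := by
      rw [Metric.mem_ball, dist_zero_right]; linarith
    have hineq := hp y hymem
    have hinner : ⟪p, y - x⟫ = ‖p‖ / 8 := by
      rw [hy]
      simp only [add_sub_cancel_left]
      rw [real_inner_smul_right, real_inner_self_eq_norm_mul_norm, hc]
      field_simp
      try ring
    rw [hinner] at hineq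
    have h1 : v y ≤ M₀ := hbound y (Metric.ball_subset_closedBall hymem)
    have h2 : 0 ≤ v x := hnonneg x (by
      rw [Metric.mem_closedBall, dist_zero_right]; linarith)
    linarith
open scoped RealInnerProductSpace
open MeasureTheory

/-- Tests against flat points: the basic subgradient estimates on a slab. -/
lemma slab_tests (d m k : ℕ) (hd : 1 ≤ d) (hm : 1 ≤ m) (hmd : m + k = d)
    (v : EuclideanSpace ℝ (Fin d) → ℝ)
    (M₀ : ℝ) (hM₀ : 0 ≤ M₀)
    (hbound : ∀ y ∈ Metric.closedBall (0 : EuclideanSpace ℝ (Fin d)) 1, v y ≤ M₀)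
    (hnonneg : ∀ y ∈ Metric.closedBall (0 : EuclideanSpace ℝ (Fin d)) 1, 0 ≤ v y)
    (r : ℝ) (hr0 : 0 < r) (hr1 : r < 1)
    (hflat : ∀ y : EuclideanSpace ℝ (Fin d),
      (∀ i : Fin d, ¬ ((i : ℕ) < m) → y i = 0) → ‖y‖ ≤ r → v y = 0)
    (ε : ℝ) (hε0 : 0 < ε) (hε1 : ε ≤ 1/(2*d))
    (x : EuclideanSpace ℝ (Fin d)) (hx : x ∈ cbox d (gfun d m (r/(4*d)) ε))
    (p : EuclideanSpace ℝ (Fin d))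
    (hp : p ∈ subdiff (Metric.ball (0 : EuclideanSpace ℝ (Fin d)) 1) v x) :
    v x ≤ ⟪p, eperp m x⟫ ∧ (∀ i : Fin d, (i : ℕ) < m → |p i| ≤ (16*(M₀+1)*d/r) * ε) := by
  have hdpos : (0:ℝ) < d := by exact_mod_cast hd
  have hapos : (0:ℝ) < r/(4*d) := by positivity
  -- norms of flat and perp parts
  have hflatcoord : ∀ i : Fin d, |eflat m x i| ≤ r/(4*d) := by
    intro i
    rw [eflat_apply]
    by_cases h : (i : ℕ) < m
    · simp only [h, if_true]
      have h2 := hx i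
      simp only [cbox, Set.mem_setOf_eq, Set.mem_Icc, gfun, h, if_true] at h2
      exact abs_le.mpr h2
    · simp [h, le_of_lt hapos]
  have hflatnorm : ‖eflat m x‖ ≤ r/4 := by
    have h1 := norm_le_card_mul (eflat m x) (r/(4*d)) (le_of_lt hapos) hflatcoord
    have hsd : Real.sqrt d ≤ d := by
      have hd1 : (1:ℝ) ≤ d := by exact_mod_cast hd
      have h2 : (d:ℝ) ≤ (d:ℝ) * d := by nlinarith
      calc Real.sqrt d ≤ Real.sqrt ((d:ℝ) * d) := Real.sqrt_le_sqrt h2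
        _ = d := Real.sqrt_mul_self (le_of_lt hdpos)
    calc ‖eflat m x‖ ≤ Real.sqrt d * (r/(4*d)) := h1
      _ ≤ (d:ℝ) * (r/(4*d)) := mul_le_mul_of_nonneg_right hsd (by positivity)
      _ = r/4 := by field_simp
  have hperpcoord : ∀ i : Fin d, |eperp m x i| ≤ ε := by
    intro i
    rw [eperp_apply]
    by_cases h : (i : ℕ) < m
    · simp [h, le_of_lt hε0]
    · simp only [h, if_false]
      have := hx i
      simp only [cbox, Set.mem_setOf_eq, Set.mem_Icc, gfun, h, if_false] at this
      exact abs_le.mpr this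
  have hperpnorm : ‖eperp m x‖ ≤ d * ε := by
    have h1 := norm_le_card_mul (eperp m x) ε (le_of_lt hε0) hperpcoord
    have hsd : Real.sqrt d ≤ d := by
      have hd1 : (1:ℝ) ≤ d := by exact_mod_cast hd
      have h2 : (d:ℝ) ≤ (d:ℝ) * d := by nlinarith
      calc Real.sqrt d ≤ Real.sqrt ((d:ℝ) * d) := Real.sqrt_le_sqrt h2
        _ = d := Real.sqrt_mul_self (le_of_lt hdpos)
    calc ‖eperp m x‖ ≤ Real.sqrt d * ε := h1
      _ ≤ (d:ℝ) * ε := mul_le_mul_of_nonneg_right hsd (le_of_lt hε0)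
  -- flat point vanishing
  have hflatzero : v (eflat m x) = 0 := by
    apply hflat
    · intro i hi
      simp [eflat_apply, hi]
    · linarith
  have hflatball : eflat m x ∈ Metric.ball (0 : EuclideanSpace ℝ (Fin d)) 1 := by
    rw [Metric.mem_ball, dist_zero_right]; linarith
  -- norm bound on p
  have hxball : ‖x‖ ≤ 3/4 := by
    have := box_subset_closedBall d m hd r ε hr0 (le_of_lt hr1) (le_of_lt hε0) hε1 hx
    rwa [Metric.mem_closedBall, dist_zero_right] at this
  have hpnorm : ‖p‖ ≤ 8 * M₀ := subgrad_norm_le d v M₀ hM₀ hbound hnonneg x hxball p hp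
  have hvx : 0 ≤ v x := hnonneg x (by rw [Metric.mem_closedBall, dist_zero_right]; linarith)
  -- part 1
  have hpart1 : v x ≤ ⟪p, eperp m x⟫ := by
    have h1 := hp (eflat m x) hflatball
    have h2 : eflat m x - x = -(eperp m x) := by
      have h3 := eflat_add_eperp (m := m) x
      rw [eq_sub_of_add_eq h3]
      abel
    rw [h2, inner_neg_right, hflatzero] at h1
    linarith
  refine ⟨hpart1, ?_⟩
  -- part 2: coordinate bounds
  intro i hi
  have hinner_perp : |⟪p, eperp m x⟫| ≤ 8*M₀*(d*ε) := by
    have h1 := abs_real_inner_le_norm p (eperp m x)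
    have h2 : ‖p‖ * ‖eperp m x‖ ≤ (8*M₀) * (d*ε) := by
      apply mul_le_mul hpnorm hperpnorm (norm_nonneg _) (by positivity)
    linarith
  have key : ∀ s : ℝ, |s| = 1 →
      s * (r/2) * p i ≤ ⟪p, eperp m x⟫ := by
    intro s hs
    set y : EuclideanSpace ℝ (Fin d) := eflat m x + (s*(r/2)) • EuclideanSpace.single i 1 with hydef
    have hynorm : ‖y‖ ≤ 3*r/4 := by
      calc ‖y‖ ≤ ‖eflat m x‖ + ‖(s*(r/2)) • EuclideanSpace.single i (1:ℝ)‖ := norm_add_le _ _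
        _ ≤ r/4 + r/2 := by
            apply add_le_add hflatnorm
            rw [norm_smul, EuclideanSpace.norm_single]
            simp only [norm_one, mul_one, Real.norm_eq_abs, abs_mul, hs, one_mul]
            rw [abs_of_pos (by positivity)]
        _ = 3*r/4 := by ring
    have hyflatc : ∀ j : Fin d, ¬ ((j : ℕ) < m) → y j = 0 := by
      intro j hj
      rw [hydef]
      have hji : j ≠ i := by
        intro hji; rw [hji] at hj; exact hj hi
      simp [eflat_apply, hj, EuclideanSpace.single_apply, hji]
    have hyzero : v y = 0 := hflat y hyflatc (by linarith)
    have hyball : y ∈ Metric.ball (0 : EuclideanSpace ℝ (Fin d)) 1 := by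
      rw [Metric.mem_ball, dist_zero_right]; nlinarith
    have h1 := hp y hyball
    have h2 : y - x = -(eperp m x) + (s*(r/2)) • EuclideanSpace.single i 1 := by
      rw [hydef]
      have h3 := eflat_add_eperp (m := m) x
      rw [eq_sub_of_add_eq h3]
      abel
    rw [h2, inner_add_right, inner_neg_right, real_inner_smul_right, hyzero] at h1
    have h3 : ⟪p, EuclideanSpace.single i (1:ℝ)⟫ = p i := by
      rw [EuclideanSpace.inner_single_right]
      simp
    rw [h3] at h1
    have : s * (r/2) * p i ≤ ⟪p, eperp m x⟫ - v x := by linarith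
    linarith
  have k1 := key 1 (by norm_num)
  have k2 := key (-1) (by norm_num)
  have hub : ⟪p, eperp m x⟫ ≤ 8*M₀*(d*ε) := le_trans (le_abs_self _) hinner_perp
  have hrp : (0:ℝ) < r/2 := by positivity
  have hC : 8*M₀*(d*ε) ≤ (r/2) * ((16*(M₀+1)*d/r) * ε) := by
    have heq : (r/2) * ((16*(M₀+1)*d/r) * ε) = 8*(M₀+1)*(d*ε) := by field_simp; ring
    rw [heq]
    nlinarith [mul_nonneg hdpos.le hε0.le]
  rw [abs_le]
  constructor
  · have h5 : (r/2) * (-(p i)) ≤ (r/2) * ((16*(M₀+1)*d/r) * ε) := by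
      have e1 : (r/2) * (-(p i)) = -1 * (r/2) * p i := by ring
      rw [e1]
      exact le_trans k2 (le_trans hub hC)
    have h6 := le_of_mul_le_mul_left h5 hrp
    linarith
  · have h5 : (r/2) * (p i) ≤ (r/2) * ((16*(M₀+1)*d/r) * ε) := by
      have e1 : (r/2) * (p i) = 1 * (r/2) * p i := by ring
      rw [e1]
      exact le_trans k1 (le_trans hub hC)
    exact le_of_mul_le_mul_left h5 hrp
open scoped RealInnerProductSpace
open MeasureTheory

/-- Lower bound for the volume of the closure of the perp-projection of the
subdifferential image of the slab. -/
lemma Q_volume_lb (d m k : ℕ) (hd : 1 ≤ d) (hm : 1 ≤ m) (hk : 1 ≤ k) (hkm : k ≤ m)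
    (hmd : m + k = d)
    (v : EuclideanSpace ℝ (Fin d) → ℝ)
    (M₀ : ℝ) (hM₀ : 0 ≤ M₀)
    (hbound : ∀ y ∈ Metric.closedBall (0 : EuclideanSpace ℝ (Fin d)) 1, v y ≤ M₀)
    (hnonneg : ∀ y ∈ Metric.closedBall (0 : EuclideanSpace ℝ (Fin d)) 1, 0 ≤ v y)
    (r : ℝ) (hr0 : 0 < r) (hr1 : r < 1)
    (hflat : ∀ y : EuclideanSpace ℝ (Fin d),
      (∀ i : Fin d, ¬ ((i : ℕ) < m) → y i = 0) → ‖y‖ ≤ r → v y = 0)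
    (c₀ : ℝ) (hc₀ : 0 < c₀)
    (hMA : ∀ ω : Set (EuclideanSpace ℝ (Fin d)), MeasurableSet ω →
        ω ⊆ Metric.ball (0 : EuclideanSpace ℝ (Fin d)) 1 →
        ENNReal.ofReal c₀ * volume ω
          ≤ volume (subdiffSet (Metric.ball (0 : EuclideanSpace ℝ (Fin d)) 1) v ω))
    (ε : ℝ) (hε0 : 0 < ε) (hε1 : ε ≤ 1/(2*d)) :
    ENNReal.ofReal
        (c₀ * (2*(r/(4*d)))^m * (2^k - 1) / (2 * (2*(16*(M₀+1)*d/r))^m))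
      ≤ volume (closure ((restr m) ''
          (subdiffSet (Metric.ball (0 : EuclideanSpace ℝ (Fin d)) 1) v
            (cbox d (gfun d m (r/(4*d)) ε) \ cbox d (gfun d m (r/(4*d)) (ε/2)))))) := by
  have hdpos : (0:ℝ) < d := by exact_mod_cast hd
  set a : ℝ := r/(4*d) with ha
  set C₄ : ℝ := 16*(M₀+1)*d/r with hC₄
  have hapos : 0 < a := by rw [ha]; positivity
  have hC₄pos : 0 < C₄ := by rw [hC₄]; positivity
  set σ : Set (EuclideanSpace ℝ (Fin d)) :=
    cbox d (gfun d m a ε) \ cbox d (gfun d m a (ε/2)) with hσ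
  set Q : Set ({i : Fin d // ¬ ((i : ℕ) < m)} → ℝ) :=
    closure ((restr m) ''
      (subdiffSet (Metric.ball (0 : EuclideanSpace ℝ (Fin d)) 1) v σ)) with hQ
  have hσmeas : MeasurableSet σ := (cbox_measurable d _).diff (cbox_measurable d _)
  have hσball : σ ⊆ Metric.ball (0 : EuclideanSpace ℝ (Fin d)) 1 := by
    intro x hx
    have h1 := box_subset_closedBall d m hd r ε hr0 (le_of_lt hr1) (le_of_lt hε0) hε1 hx.1
    rw [Metric.mem_closedBall, dist_zero_right] at h1
    rw [Metric.mem_ball, dist_zero_right]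
    linarith
  have hma := hMA σ hσmeas hσball
  have hσvol : volume σ = ENNReal.ofReal ((2*a)^m * ((2*ε)^k - ε^k)) :=
    sigma_volume d m k hmd a ε (le_of_lt hapos) (le_of_lt hε0)
  -- subdiff set is contained in the box × Q region
  have hsub : subdiffSet (Metric.ball (0 : EuclideanSpace ℝ (Fin d)) 1) v σ ⊆
      {x : EuclideanSpace ℝ (Fin d) |
        (∀ i : Fin d, (i : ℕ) < m → |x i| ≤ C₄ * ε) ∧
        (fun j : {i : Fin d // ¬ ((i : ℕ) < m)} => x j.val) ∈ Q} := by
    intro p hp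
    rw [subdiffSet, Set.mem_iUnion] at hp
    obtain ⟨x, hx⟩ := hp
    rw [Set.mem_iUnion] at hx
    obtain ⟨hxσ, hpx⟩ := hx
    constructor
    · intro i hi
      have := (slab_tests d m k hd hm hmd v M₀ hM₀ hbound hnonneg r hr0 hr1 hflat
        ε hε0 hε1 x hxσ.1 p hpx).2 i hi
      rw [hC₄]
      exact this
    · apply subset_closure
      refine ⟨p, ?_, rfl⟩
      rw [subdiffSet, Set.mem_iUnion]
      exact ⟨x, by rw [Set.mem_iUnion]; exact ⟨hxσ, hpx⟩⟩
  have hQmeas : MeasurableSet Q := isClosed_closure.measurableSet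
  have hup : volume (subdiffSet (Metric.ball (0 : EuclideanSpace ℝ (Fin d)) 1) v σ)
      ≤ (ENNReal.ofReal (2 * (C₄ * ε)))^m * volume Q := by
    calc volume (subdiffSet (Metric.ball (0 : EuclideanSpace ℝ (Fin d)) 1) v σ)
        ≤ volume {x : EuclideanSpace ℝ (Fin d) |
            (∀ i : Fin d, (i : ℕ) < m → |x i| ≤ C₄ * ε) ∧
            (fun j : {i : Fin d // ¬ ((i : ℕ) < m)} => x j.val) ∈ Q} := measure_mono hsub
      _ ≤ (ENNReal.ofReal (2 * (C₄ * ε)))^(Fintype.card {i : Fin d // (i:ℕ) < m}) * volume Q :=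
          volume_le_box_mul d m (C₄ * ε) Q hQmeas
      _ = (ENNReal.ofReal (2 * (C₄ * ε)))^m * volume Q := by
          rw [card_subtype_fin_lt d m (by omega)]
  -- now conclude by contradiction
  by_contra hcon
  push_neg at hcon
  have hQfin : volume Q < ⊤ := lt_trans hcon ENNReal.ofReal_lt_top
  have hQle : volume Q ≤ ENNReal.ofReal
      (c₀ * (2*a)^m * (2^k - 1) / (2 * (2*C₄)^m)) := le_of_lt hcon
  have hchain : ENNReal.ofReal (c₀ * ((2*a)^m * ((2*ε)^k - ε^k)))
      ≤ ENNReal.ofReal ((2 * (C₄ * ε))^m *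
        (c₀ * (2*a)^m * (2^k - 1) / (2 * (2*C₄)^m))) := by
    calc ENNReal.ofReal (c₀ * ((2*a)^m * ((2*ε)^k - ε^k)))
        = ENNReal.ofReal c₀ * ENNReal.ofReal ((2*a)^m * ((2*ε)^k - ε^k)) := by
          rw [ENNReal.ofReal_mul (le_of_lt hc₀)]
      _ = ENNReal.ofReal c₀ * volume σ := by rw [hσvol]
      _ ≤ volume (subdiffSet (Metric.ball (0 : EuclideanSpace ℝ (Fin d)) 1) v σ) := hma
      _ ≤ (ENNReal.ofReal (2 * (C₄ * ε)))^m * volume Q := hup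
      _ ≤ (ENNReal.ofReal (2 * (C₄ * ε)))^m *
            ENNReal.ofReal (c₀ * (2*a)^m * (2^k - 1) / (2 * (2*C₄)^m)) :=
          mul_le_mul_right hQle _
      _ = ENNReal.ofReal ((2 * (C₄ * ε))^m *
            (c₀ * (2*a)^m * (2^k - 1) / (2 * (2*C₄)^m))) := by
          rw [← ENNReal.ofReal_pow (by positivity : (0:ℝ) ≤ 2 * (C₄ * ε)),
            ← ENNReal.ofReal_mul (by positivity)]
  have h2k : (0:ℝ) < 2^k - 1 := by
    have h1 : (2:ℝ)^1 ≤ 2^k := pow_le_pow_right₀ (by norm_num) hk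
    rw [pow_one] at h1
    linarith
  rw [ENNReal.ofReal_le_ofReal_iff (by positivity)] at hchain
  -- real arithmetic contradiction
  have hεk : ε^m ≤ ε^k := by
    apply pow_le_pow_of_le_one (le_of_lt hε0) _ hkm
    calc ε ≤ 1/(2*d) := hε1
      _ ≤ 1 := by
        rw [div_le_one (by positivity)]
        have hd1 : (1:ℝ) ≤ d := by exact_mod_cast hd
        linarith
  have hrhs : (2 * (C₄ * ε))^m * (c₀ * (2*a)^m * (2^k - 1) / (2 * (2*C₄)^m))
      ≤ c₀ * (2*a)^m * (2^k - 1) * ε^k / 2 := by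
    have he1 : (2 * (C₄ * ε))^m = (2*C₄)^m * ε^m := by
      rw [← mul_pow]; ring_nf
    rw [he1]
    have he2 : (2*C₄)^m * ε^m * (c₀ * (2*a)^m * (2^k - 1) / (2 * (2*C₄)^m))
        = ε^m * (c₀ * (2*a)^m * (2^k - 1)) / 2 := by
      field_simp
    rw [he2]
    have hnn : 0 ≤ c₀ * (2*a)^m * (2^k - 1) := by positivity
    calc ε^m * (c₀ * (2*a)^m * (2^k - 1)) / 2
        ≤ ε^k * (c₀ * (2*a)^m * (2^k - 1)) / 2 := by
          apply div_le_div_of_nonneg_right _ (by norm_num)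
          exact mul_le_mul_of_nonneg_right hεk hnn
      _ = c₀ * (2*a)^m * (2^k - 1) * ε^k / 2 := by ring
  have hlhs : c₀ * ((2*a)^m * ((2*ε)^k - ε^k)) = c₀ * (2*a)^m * (2^k - 1) * ε^k := by
    have : (2*ε)^k = 2^k * ε^k := by rw [mul_pow]
    rw [this]
    ring
  rw [hlhs] at hchain
  have hfinal := le_trans hchain hrhs
  have hpos : 0 < c₀ * (2*a)^m * (2^k - 1) * ε^k := by positivity
  linarith
open scoped RealInnerProductSpace
open MeasureTheory Filter

variable {d m : ℕ}

/-- lift of a perp-coordinates vector into the full space -/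
def zlift (m : ℕ) (q : {i : Fin d // ¬ ((i : ℕ) < m)} → ℝ) : EuclideanSpace ℝ (Fin d) :=
  WithLp.toLp 2 (fun i => if h : (i : ℕ) < m then 0 else q ⟨i, h⟩)

lemma zlift_flat (q : {i : Fin d // ¬ ((i : ℕ) < m)} → ℝ) :
    ∀ i : Fin d, (i : ℕ) < m → zlift m q i = 0 := by
  intro i hi; simp [zlift, hi]

lemma restr_zlift (q : {i : Fin d // ¬ ((i : ℕ) < m)} → ℝ) : restr m (zlift m q) = q := by
  funext j
  simp [restr, zlift, j.2]

lemma pairP_eq_inner_zlift (q : {i : Fin d // ¬ ((i : ℕ) < m)} → ℝ)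
    (y : EuclideanSpace ℝ (Fin d)) : pairP m q y = ⟪zlift m q, y⟫ := by
  have h1 := pairP_eq_inner (zlift m q) y (zlift_flat q)
  rw [restr_zlift] at h1
  exact h1

lemma pairP_add_smul (q u : {i : Fin d // ¬ ((i : ℕ) < m)} → ℝ) (c : ℝ)
    (y : EuclideanSpace ℝ (Fin d)) :
    pairP m (q + c • u) y = pairP m q y + c * pairP m u y := by
  unfold pairP
  rw [Finset.mul_sum, ← Finset.sum_add_distrib]
  refine Finset.sum_congr rfl (fun j _ => ?_)
  simp [Pi.add_apply, Pi.smul_apply, smul_eq_mul]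
  ring

lemma pairP_sub (q u : {i : Fin d // ¬ ((i : ℕ) < m)} → ℝ) (y : EuclideanSpace ℝ (Fin d)) :
    pairP m q y - pairP m u y = pairP m (q - u) y := by
  unfold pairP
  rw [← Finset.sum_sub_distrib]
  refine Finset.sum_congr rfl (fun j _ => ?_)
  simp [Pi.sub_apply]
  ring

lemma lipschitz_coord (i : Fin d) :
    LipschitzWith 1 (fun x : EuclideanSpace ℝ (Fin d) => x i) := by
  apply LipschitzWith.of_dist_le_mul
  intro x y
  rw [NNReal.coe_one, one_mul, Real.dist_eq, dist_eq_norm]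
  have : x i - y i = (x - y) i := by simp [PiLp.sub_apply]
  rw [this]
  exact coord_le_norm (x - y) i

lemma continuous_coord (i : Fin d) :
    Continuous (fun x : EuclideanSpace ℝ (Fin d) => x i) := (lipschitz_coord i).continuous

lemma continuous_restr : Continuous (restr m (d := d)) := by
  apply continuous_pi
  intro j
  exact continuous_coord j.val

lemma tendsto_coord {x : ℕ → EuclideanSpace ℝ (Fin d)} {x₀ : EuclideanSpace ℝ (Fin d)}
    (h : Tendsto x atTop (nhds x₀)) (i : Fin d) :
    Tendsto (fun n => x n i) atTop (nhds (x₀ i)) :=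
  ((continuous_coord i).tendsto x₀).comp h

/-- coordinate limit is zero if coordinates are bounded by a null sequence -/
lemma coord_lim_zero {x : ℕ → EuclideanSpace ℝ (Fin d)} {x₀ : EuclideanSpace ℝ (Fin d)}
    (h : Tendsto x atTop (nhds x₀)) (i : Fin d) {b : ℕ → ℝ}
    (hb : ∀ n, |x n i| ≤ b n) (hb0 : Tendsto b atTop (nhds 0)) : x₀ i = 0 := by
  have h1 := tendsto_coord h i
  have h2 : Tendsto (fun n => x n i) atTop (nhds 0) := by
    apply squeeze_zero_norm _ hb0
    intro n
    rw [Real.norm_eq_abs]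
    exact hb n
  exact tendsto_nhds_unique h1 h2

/-- membership of Z is preserved under limits etc. is done inline; here: Z is closed -/
lemma Z_isClosed (v : EuclideanSpace ℝ (Fin d) → ℝ) :
    IsClosed {q : {i : Fin d // ¬ ((i : ℕ) < m)} → ℝ |
      ∀ y ∈ Metric.ball (0 : EuclideanSpace ℝ (Fin d)) 1, pairP m q y ≤ v y} := by
  have : {q : {i : Fin d // ¬ ((i : ℕ) < m)} → ℝ |
      ∀ y ∈ Metric.ball (0 : EuclideanSpace ℝ (Fin d)) 1, pairP m q y ≤ v y}
      = ⋂ y ∈ Metric.ball (0 : EuclideanSpace ℝ (Fin d)) 1,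
        {q | pairP m q y ≤ v y} := by
    ext q; simp [Set.mem_iInter]
  rw [this]
  apply isClosed_biInter
  intro y _
  apply isClosed_le _ continuous_const
  unfold pairP
  apply continuous_finset_sum
  intro j _
  exact (continuous_apply j).mul continuous_const

lemma Z_convex (v : EuclideanSpace ℝ (Fin d) → ℝ) :
    Convex ℝ {q : {i : Fin d // ¬ ((i : ℕ) < m)} → ℝ |
      ∀ y ∈ Metric.ball (0 : EuclideanSpace ℝ (Fin d)) 1, pairP m q y ≤ v y} := by
  intro q1 h1 q2 h2 a b ha hb hab
  intro y hy
  have e1 : pairP m (a • q1 + b • q2) y = a * pairP m q1 y + b * pairP m q2 y := by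
    unfold pairP
    rw [Finset.mul_sum, Finset.mul_sum, ← Finset.sum_add_distrib]
    refine Finset.sum_congr rfl (fun j _ => ?_)
    simp [Pi.add_apply, Pi.smul_apply, smul_eq_mul]
    ring
  rw [e1]
  calc a * pairP m q1 y + b * pairP m q2 y ≤ a * v y + b * v y := by
        apply add_le_add
        · exact mul_le_mul_of_nonneg_left (h1 y hy) ha
        · exact mul_le_mul_of_nonneg_left (h2 y hy) hb
    _ = v y := by rw [← add_mul, hab, one_mul]

lemma Z_bounded (v : EuclideanSpace ℝ (Fin d) → ℝ) (M₀ : ℝ) (hM₀ : 0 ≤ M₀)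
    (hbound : ∀ y ∈ Metric.closedBall (0 : EuclideanSpace ℝ (Fin d)) 1, v y ≤ M₀)
    (q : {i : Fin d // ¬ ((i : ℕ) < m)} → ℝ)
    (hq : ∀ y ∈ Metric.ball (0 : EuclideanSpace ℝ (Fin d)) 1, pairP m q y ≤ v y) :
    ‖q‖ ≤ 2 * M₀ := by
  rcases eq_or_ne (zlift m q) 0 with h0 | h0
  · have : q = 0 := by
      funext j
      have := congrFun (congrArg WithLp.ofLp h0) j.val
      simpa [zlift, j.2] using this
    rw [this]
    simp
    linarith
  · have hzn : 0 < ‖zlift m q‖ := norm_pos_iff.mpr h0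
    set y : EuclideanSpace ℝ (Fin d) := ((2 * ‖zlift m q‖)⁻¹) • zlift m q with hy
    have hynorm : ‖y‖ = 1/2 := by
      rw [hy, norm_smul, Real.norm_eq_abs, abs_of_pos (by positivity)]
      field_simp
      try ring
    have hymem : y ∈ Metric.ball (0 : EuclideanSpace ℝ (Fin d)) 1 := by
      rw [Metric.mem_ball, dist_zero_right, hynorm]; norm_num
    have h1 := hq y hymem
    rw [pairP_eq_inner_zlift] at h1
    have h2 : ⟪zlift m q, y⟫ = ‖zlift m q‖ / 2 := by
      rw [hy, real_inner_smul_right, real_inner_self_eq_norm_mul_norm]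
      field_simp
    rw [h2] at h1
    have h3 : v y ≤ M₀ := hbound y (Metric.ball_subset_closedBall hymem)
    have h4 : ‖zlift m q‖ ≤ 2 * M₀ := by linarith
    rw [pi_norm_le_iff_of_nonneg (by linarith)]
    intro j
    rw [Real.norm_eq_abs]
    have h5 : |q j| = |zlift m q j.val| := by
      simp [zlift, j.2]
    rw [h5]
    exact le_trans (coord_le_norm _ _) h4
open scoped RealInnerProductSpace
open MeasureTheory Filter

set_option maxHeartbeats 1000000

lemma sqrtd_le (d : ℕ) (hd : 1 ≤ d) : Real.sqrt d ≤ d := by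
  have hdpos : (0:ℝ) < d := by exact_mod_cast hd
  have hd1 : (1:ℝ) ≤ d := by exact_mod_cast hd
  have h2 : (d:ℝ) ≤ (d:ℝ) * d := by nlinarith
  calc Real.sqrt d ≤ Real.sqrt ((d:ℝ) * d) := Real.sqrt_le_sqrt h2
    _ = d := Real.sqrt_mul_self (le_of_lt hdpos)

lemma core (d k m : ℕ) (hk : 1 ≤ k) (hm : 1 ≤ m) (hkm : k ≤ m) (hmd : m + k = d)
    (v : EuclideanSpace ℝ (Fin d) → ℝ)
    (hcont : ContinuousOn v (Metric.closedBall 0 1))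
    (M₀ : ℝ) (hM₀ : 0 ≤ M₀)
    (hbound : ∀ y ∈ Metric.closedBall (0 : EuclideanSpace ℝ (Fin d)) 1, v y ≤ M₀)
    (hnonneg : ∀ y ∈ Metric.closedBall (0 : EuclideanSpace ℝ (Fin d)) 1, 0 ≤ v y)
    (r : ℝ) (hr0 : 0 < r) (hr1 : r < 1)
    (hflat : ∀ y : EuclideanSpace ℝ (Fin d),
        (∀ i : Fin d, ¬ ((i : ℕ) < m) → y i = 0) → ‖y‖ ≤ r → v y = 0)
    (c₀ : ℝ) (hc₀ : 0 < c₀)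
    (hMA : ∀ ω : Set (EuclideanSpace ℝ (Fin d)), MeasurableSet ω →
        ω ⊆ Metric.ball (0 : EuclideanSpace ℝ (Fin d)) 1 →
        ENNReal.ofReal c₀ * volume ω
          ≤ volume (subdiffSet (Metric.ball (0 : EuclideanSpace ℝ (Fin d)) 1) v ω)) :
    False := by
  classical
  have hd : 1 ≤ d := by omega
  have hdpos : (0:ℝ) < d := by exact_mod_cast hd
  have hkpos : (0:ℝ) < k := by exact_mod_cast hk
  set a : ℝ := r/(4*d) with ha
  have hapos : 0 < a := by rw [ha]; positivity
  have h2k : (0:ℝ) < 2^k - 1 := by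
    have h1 : (2:ℝ)^1 ≤ 2^k := pow_le_pow_right₀ (by norm_num) hk
    rw [pow_one] at h1
    linarith
  set cstar : ℝ := c₀ * (2*a)^m * (2^k - 1) / (2 * (2*(16*(M₀+1)*d/r))^m) with hcstar
  have hcstarpos : 0 < cstar := by
    rw [hcstar]
    apply div_pos
    · apply mul_pos (mul_pos hc₀ (by positivity)) h2k
    · positivity
  -- the perp minorant set
  set Zset : Set ({i : Fin d // ¬ ((i : ℕ) < m)} → ℝ) :=
    {q | ∀ y ∈ Metric.ball (0 : EuclideanSpace ℝ (Fin d)) 1, pairP m q y ≤ v y} with hZdef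
  have hZclosed : IsClosed Zset := Z_isClosed v
  have hZconvex : Convex ℝ Zset := Z_convex v
  set F : Set ({i : Fin d // ¬ ((i : ℕ) < m)} → ℝ) := frontier Zset with hFdef
  have hFnull : volume F = 0 := Convex.addHaar_frontier volume hZconvex
  have hFclosed : IsClosed F := isClosed_frontier
  have hFsubZ : F ⊆ Zset := by
    rw [hFdef]
    rw [hZclosed.frontier_eq]
    exact Set.diff_subset
  have hFbdd : Bornology.IsBounded F := by
    apply Bornology.IsBounded.subset (Metric.isBounded_closedBall (x := (0 : _)) (r := 2*M₀))
    intro q hq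
    rw [Metric.mem_closedBall, dist_zero_right]
    exact Z_bounded v M₀ hM₀ hbound q (hFsubZ hq)
  have hcthfin : volume (Metric.cthickening 1 F) ≠ ⊤ := by
    have hbdd2 : Bornology.IsBounded (Metric.cthickening 1 F) :=
      Bornology.IsBounded.cthickening hFbdd
    obtain ⟨R, hR⟩ := hbdd2.subset_closedBall (0 : _)
    exact ne_top_of_le_ne_top
      (IsCompact.measure_lt_top (isCompact_closedBall _ _)).ne (measure_mono hR)
  have htendvol : Tendsto (fun η => volume (Metric.cthickening η F)) (nhds 0)
      (nhds 0) := by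
    have := tendsto_measure_cthickening_of_isClosed ⟨1, one_pos, hcthfin⟩ hFclosed
    rwa [hFnull] at this
  have hev : ∀ᶠ η in nhds (0:ℝ), volume (Metric.cthickening η F) < ENNReal.ofReal cstar := by
    apply htendvol.eventually_lt_const
    exact ENNReal.ofReal_pos.mpr hcstarpos
  obtain ⟨δ₀, hδ₀, hδP⟩ := Metric.eventually_nhds_iff.mp hev
  set η : ℝ := δ₀ / 2 with hη
  have hη0 : 0 < η := by rw [hη]; linarith
  have hηvol : volume (Metric.cthickening η F) < ENNReal.ofReal cstar := by
    apply hδP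
    rw [Real.dist_eq, hη]
    rw [abs_of_pos (by linarith)]
    linarith
  -- slab and projection sets
  set σf : ℝ → Set (EuclideanSpace ℝ (Fin d)) :=
    fun ε => cbox d (gfun d m a ε) \ cbox d (gfun d m a (ε/2)) with hσf
  set Qf : ℝ → Set ({i : Fin d // ¬ ((i : ℕ) < m)} → ℝ) :=
    fun ε => closure ((restr m) ''
      (subdiffSet (Metric.ball (0 : EuclideanSpace ℝ (Fin d)) 1) v (σf ε))) with hQf
  suffices hclaim : ∃ ε : ℝ, 0 < ε ∧ ε ≤ 1/(2*(d:ℝ)) ∧ Qf ε ⊆ Metric.cthickening η F by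
    obtain ⟨ε, hε0, hε1, hsubQ⟩ := hclaim
    have hlb := Q_volume_lb d m k hd hm hk hkm hmd v M₀ hM₀ hbound hnonneg r hr0 hr1
      hflat c₀ hc₀ hMA ε hε0 hε1
    rw [← ha, ← hcstar] at hlb
    exact absurd (le_trans hlb (measure_mono hsubQ)) (not_le.mpr hηvol)
  by_contra hno
  push_neg at hno
  -- a vanishing sequence of slab widths
  set εs : ℕ → ℝ := fun n => (1/(2*d)) * (1/(n+1)) with hεs
  have hεs0 : ∀ n, 0 < εs n := by
    intro n
    rw [hεs]
    positivity
  have hεs1 : ∀ n, εs n ≤ 1/(2*(d:ℝ)) := by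
    intro n
    rw [hεs]
    have h1 : (1:ℝ)/(n+1) ≤ 1 := by
      rw [div_le_one (by positivity)]
      simp
    have h2 := mul_le_mul_of_nonneg_left h1 (by positivity : (0:ℝ) ≤ 1/(2*(d:ℝ)))
    simpa using h2
  have hεslim : Tendsto εs atTop (nhds 0) := by
    rw [hεs]
    have h1 : Tendsto (fun n : ℕ => 1/((n:ℝ)+1)) atTop (nhds 0) :=
      tendsto_one_div_add_atTop_nhds_zero_nat
    have := h1.const_mul (1/(2*(d:ℝ)))
    simpa using this
  -- select bad points
  have hsel : ∀ n : ℕ, ∃ x p, x ∈ σf (εs n) ∧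
      p ∈ subdiff (Metric.ball (0 : EuclideanSpace ℝ (Fin d)) 1) v x ∧
      restr m p ∉ Metric.cthickening (η/2) F := by
    intro n
    obtain ⟨qbar, hqQ, hqout⟩ := Set.not_subset.mp (hno (εs n) (hεs0 n) (hεs1 n))
    rw [hQf] at hqQ
    rw [Metric.mem_closure_iff] at hqQ
    obtain ⟨q, hqim, hqdist⟩ := hqQ (η/2) (by linarith)
    obtain ⟨p, hpS, hpq⟩ := hqim
    rw [subdiffSet, Set.mem_iUnion] at hpS
    obtain ⟨x, hx⟩ := hpS
    rw [Set.mem_iUnion] at hx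
    obtain ⟨hxσ, hpx⟩ := hx
    refine ⟨x, p, hxσ, hpx, ?_⟩
    intro hmem
    apply hqout
    rw [Metric.mem_cthickening_iff]
    calc EMetric.infEdist qbar F
        ≤ edist qbar (restr m p) + EMetric.infEdist (restr m p) F :=
          EMetric.infEdist_le_edist_add_infEdist
      _ ≤ ENNReal.ofReal (η/2) + ENNReal.ofReal (η/2) := by
          apply add_le_add
          · rw [edist_dist]
            apply ENNReal.ofReal_le_ofReal
            rw [← hpq] at hqdist
            exact le_of_lt hqdist
          · exact Metric.mem_cthickening_iff.mp hmem
      _ = ENNReal.ofReal η := by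
          rw [← ENNReal.ofReal_add (by linarith) (by linarith)]
          norm_num
  choose xs ps hxσ hpsub hout using hsel
  -- compactness of the graph
  have hxball : ∀ n, xs n ∈ Metric.closedBall (0 : EuclideanSpace ℝ (Fin d)) (3/4) := by
    intro n
    exact box_subset_closedBall d m hd r (εs n) hr0 (le_of_lt hr1) (le_of_lt (hεs0 n))
      (hεs1 n) (hxσ n).1
  have hxnorm : ∀ n, ‖xs n‖ ≤ 3/4 := by
    intro n
    have := hxball n
    rwa [Metric.mem_closedBall, dist_zero_right] at this
  have hpnorm : ∀ n, ‖ps n‖ ≤ 8*M₀ := by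
    intro n
    exact subgrad_norm_le d v M₀ hM₀ hbound hnonneg (xs n) (hxnorm n) (ps n) (hpsub n)
  have hK : IsCompact ((Metric.closedBall (0 : EuclideanSpace ℝ (Fin d)) (3/4)) ×ˢ
      (Metric.closedBall (0 : EuclideanSpace ℝ (Fin d)) (8*M₀))) :=
    (isCompact_closedBall _ _).prod (isCompact_closedBall _ _)
  obtain ⟨zlim, hzmem, φ, hφmono, hφtend⟩ := hK.tendsto_subseq
    (x := fun n => (xs n, ps n))
    (fun n => Set.mem_prod.mpr ⟨hxball n, by
      rw [Metric.mem_closedBall, dist_zero_right]; exact hpnorm n⟩)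
  set xstar := zlim.1 with hxstar
  set pstar := zlim.2 with hpstar
  have hxt : Tendsto (fun n => xs (φ n)) atTop (nhds xstar) :=
    (continuous_fst.tendsto _).comp hφtend
  have hpt : Tendsto (fun n => ps (φ n)) atTop (nhds pstar) :=
    (continuous_snd.tendsto _).comp hφtend
  have hφlim : Tendsto (fun n => εs (φ n)) atTop (nhds 0) :=
    hεslim.comp hφmono.tendsto_atTop
  -- slab tests along the sequence
  have htests : ∀ n, v (xs n) ≤ ⟪ps n, eperp m (xs n)⟫ ∧
      (∀ i : Fin d, (i : ℕ) < m → |ps n i| ≤ (16*(M₀+1)*d/r) * εs n) := by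
    intro n
    exact slab_tests d m k hd hm hmd v M₀ hM₀ hbound hnonneg r hr0 hr1 hflat
      (εs n) (hεs0 n) (hεs1 n) (xs n) (hxσ n).1 (ps n) (hpsub n)
  -- coordinates of the limits
  have hxcoord_perp : ∀ i : Fin d, ¬ ((i : ℕ) < m) → xstar i = 0 := by
    intro i hi
    apply coord_lim_zero hxt i (b := fun n => εs (φ n))
    · intro n
      have hb := (hxσ (φ n)).1 i
      simp only [cbox, Set.mem_setOf_eq, Set.mem_Icc, gfun, hi, if_false] at hb
      exact abs_le.mpr hb
    · exact hφlim
  have hxcoord_flat : ∀ i : Fin d, (i : ℕ) < m → |xstar i| ≤ a := by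
    intro i hi
    have hcoordt := tendsto_coord hxt i
    have habs : Tendsto (fun n => |xs (φ n) i|) atTop (nhds (|xstar i|)) := hcoordt.abs
    apply le_of_tendsto habs
    apply Filter.Eventually.of_forall
    intro n
    have hb := (hxσ (φ n)).1 i
    simp only [cbox, Set.mem_setOf_eq, Set.mem_Icc, gfun, hi, if_true] at hb
    exact abs_le.mpr hb
  have hxstar_norm : ‖xstar‖ ≤ r/4 := by
    have hc : ∀ i : Fin d, |xstar i| ≤ a := by
      intro i
      by_cases hi : (i : ℕ) < m
      · exact hxcoord_flat i hi
      · rw [hxcoord_perp i hi]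
        simp [le_of_lt hapos]
    have h1 := norm_le_card_mul xstar a (le_of_lt hapos) hc
    calc ‖xstar‖ ≤ Real.sqrt d * a := h1
      _ ≤ (d:ℝ) * a := mul_le_mul_of_nonneg_right (sqrtd_le d hd) (le_of_lt hapos)
      _ = r/4 := by rw [ha]; field_simp
  have hvxstar : v xstar = 0 := by
    apply hflat xstar hxcoord_perp
    linarith
  have hxstar_ball : xstar ∈ Metric.ball (0 : EuclideanSpace ℝ (Fin d)) 1 := by
    rw [Metric.mem_ball, dist_zero_right]
    linarith
  -- flat coordinates of pstar vanish
  have hpcoord_flat : ∀ i : Fin d, (i : ℕ) < m → pstar i = 0 := by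
    intro i hi
    apply coord_lim_zero hpt i (b := fun n => (16*(M₀+1)*d/r) * εs (φ n))
    · intro n
      exact (htests (φ n)).2 i hi
    · have := hφlim.const_mul (16*(M₀+1)*(d:ℝ)/r)
      simpa using this
  -- pstar is a subgradient at xstar
  have hcontat : ContinuousAt v xstar := by
    apply hcont.continuousAt
    apply Filter.mem_of_superset (Metric.isOpen_ball.mem_nhds hxstar_ball)
    exact Metric.ball_subset_closedBall
  have hpsubstar : ∀ y ∈ Metric.ball (0 : EuclideanSpace ℝ (Fin d)) 1,
      v xstar + ⟪pstar, y - xstar⟫ ≤ v y := by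
    intro y hy
    have hlim : Tendsto (fun n => v (xs (φ n)) + ⟪ps (φ n), y - xs (φ n)⟫)
        atTop (nhds (v xstar + ⟪pstar, y - xstar⟫)) := by
      apply Tendsto.add
      · exact hcontat.tendsto.comp hxt
      · exact hpt.inner (tendsto_const_nhds.sub hxt)
    apply le_of_tendsto hlim
    apply Filter.Eventually.of_forall
    intro n
    exact hpsub (φ n) y hy
  -- qstar is in Z
  set qstar := restr m pstar with hqstar
  have hqstarZ : qstar ∈ Zset := by
    intro y hy
    rw [hqstar, pairP_eq_inner pstar y hpcoord_flat]
    have h1 := hpsubstar y hy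
    have h2 : ⟪pstar, xstar⟫ = 0 := by
      rw [inner_sum_euclid']
      apply Finset.sum_eq_zero
      intro i _
      by_cases hi : (i : ℕ) < m
      · rw [hpcoord_flat i hi, zero_mul]
      · rw [hxcoord_perp i hi, mul_zero]
    rw [inner_sub_right, hvxstar, h2] at h1
    linarith
  -- qstar is not in the interior of Z
  have hqtend : Tendsto (fun n => restr m (ps (φ n))) atTop (nhds qstar) := by
    rw [hqstar]
    exact (continuous_restr.tendsto _).comp hpt
  have hqstar_notint : qstar ∉ interior Zset := by
    intro hint
    rw [mem_interior_iff_mem_nhds, Metric.mem_nhds_iff] at hint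
    obtain ⟨δ, hδ0, hball⟩ := hint
    have hklow : ∀ n, δ/(2*k) ≤ ‖restr m (ps (φ n)) - qstar‖ := by
      intro n
      set x := xs (φ n) with hx
      set p := ps (φ n) with hp
      set w := eperp m x with hw
      -- w ≠ 0
      have hwne : w ≠ 0 := by
        have hnotin := (hxσ (φ n)).2
        simp only [cbox, Set.mem_setOf_eq] at hnotin
        push_neg at hnotin
        obtain ⟨i, hi⟩ := hnotin
        have hiperp : ¬ ((i : ℕ) < m) := by
          intro hilt
          apply hi
          have := (hxσ (φ n)).1 i
          simp only [cbox, Set.mem_setOf_eq, Set.mem_Icc, gfun, hilt, if_true] at this ⊢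
          exact this
        intro hw0
        apply hi
        have hwi : w i = x i := by rw [hw]; simp [eperp_apply, hiperp]
        have hx0 : x i = 0 := by rw [← hwi, hw0]; rfl
        rw [← hx, hx0]
        simp only [Set.mem_Icc, gfun, hiperp, if_false]
        constructor
        · rw [neg_nonpos]; linarith [hεs0 (φ n)]
        · linarith [hεs0 (φ n)]
      have hwpos : 0 < ‖w‖ := norm_pos_iff.mpr hwne
      -- the shifted point q''
      set qq : {i : Fin d // ¬ ((i : ℕ) < m)} → ℝ :=
        qstar + ((δ/2) * ‖w‖⁻¹) • restr m w with hqq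
      have hqqZ : qq ∈ Zset := by
        apply hball
        rw [Metric.mem_ball, dist_eq_norm, hqq]
        simp only [add_sub_cancel_left]
        have h1 : ‖((δ/2) * ‖w‖⁻¹) • restr m w‖ ≤ δ/2 := by
          rw [norm_smul, Real.norm_eq_abs, abs_of_pos (by positivity)]
          have h2 : ‖restr m w‖ ≤ ‖w‖ := by
            rw [pi_norm_le_iff_of_nonneg (norm_nonneg w)]
            intro j
            rw [Real.norm_eq_abs]
            exact coord_le_norm w j.val
          calc (δ/2) * ‖w‖⁻¹ * ‖restr m w‖ ≤ (δ/2) * ‖w‖⁻¹ * ‖w‖ := by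
                apply mul_le_mul_of_nonneg_left h2 (by positivity)
            _ = δ/2 := by field_simp
        linarith
      -- x is in the unit ball
      have hxball1 : x ∈ Metric.ball (0 : EuclideanSpace ℝ (Fin d)) 1 := by
        rw [Metric.mem_ball, dist_zero_right]
        have := hxnorm (φ n)
        rw [← hx] at this
        linarith
      -- chain of inequalities
      have hA : v x ≤ ⟪p, w⟫ := (htests (φ n)).1
      have hB : pairP m qq x ≤ v x := hqqZ x hxball1
      have hqq_eval : pairP m qq x = pairP m qstar x + (δ/2) * ‖w‖ := by
        rw [hqq, pairP_add_smul]
        congr 1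
        have h1 : pairP m (restr m w) x = ⟪w, eperp m x⟫ := (inner_eperp_eq_pairP w x).symm
        rw [h1]
        have h2 : eperp m x = w := hw.symm
        rw [h2, real_inner_self_eq_norm_mul_norm]
        field_simp
      have hC : ⟪p, w⟫ = pairP m (restr m p) x := by
        rw [hw]
        exact inner_eperp_eq_pairP p x
      have hgap : (δ/2) * ‖w‖ ≤ pairP m (restr m p) x - pairP m qstar x := by
        rw [← hC]
        have := hqq_eval ▸ hB
        linarith
      have hbound2 : pairP m (restr m p) x - pairP m qstar x
          ≤ ‖restr m p - qstar‖ * (k * ‖w‖) := by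
        rw [pairP_sub]
        unfold pairP
        have hsum : ∀ j : {i : Fin d // ¬ ((i : ℕ) < m)},
            (restr m p - qstar) j * x j.val ≤ ‖restr m p - qstar‖ * ‖w‖ := by
          intro j
          have h1 : |(restr m p - qstar) j| ≤ ‖restr m p - qstar‖ := by
            rw [← Real.norm_eq_abs]
            exact norm_le_pi_norm _ j
          have h2 : |x j.val| ≤ ‖w‖ := by
            have : w j.val = x j.val := by rw [hw]; simp [eperp_apply, j.2]
            rw [← this]
            exact coord_le_norm w j.val
          calc (restr m p - qstar) j * x j.val ≤ |(restr m p - qstar) j * x j.val| :=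
                le_abs_self _
            _ = |(restr m p - qstar) j| * |x j.val| := abs_mul _ _
            _ ≤ ‖restr m p - qstar‖ * ‖w‖ := by
                apply mul_le_mul h1 h2 (abs_nonneg _) (norm_nonneg _)
        calc ∑ j, (restr m p - qstar) j * x j.val
            ≤ ∑ _j : {i : Fin d // ¬ ((i : ℕ) < m)}, ‖restr m p - qstar‖ * ‖w‖ :=
              Finset.sum_le_sum (fun j _ => hsum j)
          _ = (Fintype.card {i : Fin d // ¬ ((i : ℕ) < m)}) *
              (‖restr m p - qstar‖ * ‖w‖) := by
              rw [Finset.sum_const]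
              simp [nsmul_eq_mul]
          _ = ‖restr m p - qstar‖ * (k * ‖w‖) := by
              have hcard : Fintype.card {i : Fin d // ¬ ((i : ℕ) < m)} = k := by
                rw [Fintype.card_subtype_compl, card_subtype_fin_lt d m (by omega)]
                simp
                omega
              rw [hcard]
              ring
      have hfin2 : (δ/2) * ‖w‖ ≤ ‖restr m p - qstar‖ * (k * ‖w‖) :=
        le_trans hgap hbound2
      -- divide by ‖w‖ and k
      have h3 : δ/2 ≤ ‖restr m p - qstar‖ * k := by
        have h4 : (δ/2) * ‖w‖ ≤ (‖restr m p - qstar‖ * k) * ‖w‖ := by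
          calc (δ/2) * ‖w‖ ≤ ‖restr m p - qstar‖ * (k * ‖w‖) := hfin2
            _ = (‖restr m p - qstar‖ * k) * ‖w‖ := by ring
        exact le_of_mul_le_mul_right h4 hwpos
      rw [div_le_iff₀ (by positivity : (0:ℝ) < 2*(k:ℝ))]
      calc δ = (δ/2) * 2 := by ring
        _ ≤ (‖restr m p - qstar‖ * k) * 2 := by linarith
        _ = ‖restr m p - qstar‖ * (2*(k:ℝ)) := by ring
    -- contradiction with convergence
    obtain ⟨N, hN⟩ := (Metric.tendsto_atTop.mp hqtend) (δ/(2*(k:ℝ))) (by positivity)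
    have hn := hN N le_rfl
    rw [dist_eq_norm] at hn
    exact absurd hn (not_lt.mpr (hklow N))
  -- so qstar ∈ F
  have hqstarF : qstar ∈ F := by
    rw [hFdef, hZclosed.frontier_eq]
    exact ⟨hqstarZ, hqstar_notint⟩
  -- contradiction with hout
  obtain ⟨N, hN⟩ := (Metric.tendsto_atTop.mp hqtend) (η/2) (by linarith)
  have hn := hN N le_rfl
  apply hout (φ N)
  exact Metric.mem_cthickening_of_dist_le _ _ _ _ hqstarF (le_of_lt hn)

open scoped RealInnerProductSpace
open MeasureTheory

set_option maxHeartbeats 1000000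

/-- **Multidimensional Alexandrov–Heinz theorem.** Let `d ≥ 2`,
`1 ≤ k`, `2k ≤ d`.  Let `h` be continuous and convex on the closed unit ball of
`ℝ^d`, whose Monge–Ampère measure on the open ball `B` satisfies
`L(∂h(ω)) ≥ c₀·L(ω)` for every Borel `ω ⊆ B`, with `c₀ > 0`.  If `h` vanishes on
the sphere of radius `r ∈ (0,1)` of the coordinate subspace where the last `k`
coordinates vanish (a `(d−k)`-dimensional sphere), then `h 0 < 0`. -/
theorem stmt8 (d k : ℕ) (hd : 2 ≤ d) (hk : 1 ≤ k) (hkd : 2 * k ≤ d)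
    (h : EuclideanSpace ℝ (Fin d) → ℝ)
    (hcont : ContinuousOn h (Metric.closedBall (0 : EuclideanSpace ℝ (Fin d)) 1))
    (hconv : ConvexOn ℝ (Metric.closedBall (0 : EuclideanSpace ℝ (Fin d)) 1) h)
    (c₀ : ℝ) (hc₀ : 0 < c₀)
    (hMA : ∀ ω : Set (EuclideanSpace ℝ (Fin d)), MeasurableSet ω →
        ω ⊆ Metric.ball (0 : EuclideanSpace ℝ (Fin d)) 1 →
        ENNReal.ofReal c₀ * volume ω
          ≤ volume (subdiffSet (Metric.ball (0 : EuclideanSpace ℝ (Fin d)) 1) h ω))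
    (r : ℝ) (hr0 : 0 < r) (hr1 : r < 1)
    (hvanish : ∀ x : EuclideanSpace ℝ (Fin d), ‖x‖ = r →
        (∀ i : Fin d, d - k ≤ (i : ℕ) → x i = 0) → h x = 0) :
    h 0 < 0 := by
  by_contra hcon
  push_neg at hcon
  -- step 0 : h 0 = 0
  set x₀ : EuclideanSpace ℝ (Fin d) :=
    r • EuclideanSpace.single (⟨0, by omega⟩ : Fin d) (1:ℝ) with hx₀def
  have hx₀norm : ‖x₀‖ = r := by
    rw [hx₀def, norm_smul, EuclideanSpace.norm_single]
    simp [abs_of_pos hr0]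
  have hx₀coord : ∀ i : Fin d, d - k ≤ (i : ℕ) → x₀ i = 0 := by
    intro i hi
    have hne : i ≠ (⟨0, by omega⟩ : Fin d) := by
      intro hh; rw [hh] at hi; simp at hi; omega
    simp [hx₀def, EuclideanSpace.single_apply, hne]
  have hnx₀coord : ∀ i : Fin d, d - k ≤ (i : ℕ) → (-x₀) i = 0 := by
    intro i hi
    have h1 := hx₀coord i hi
    have h2 : (-x₀) i = -(x₀ i) := rfl
    rw [h2, h1, neg_zero]
  have hzero₁ : h x₀ = 0 := hvanish x₀ hx₀norm hx₀coord
  have hzero₂ : h (-x₀) = 0 := hvanish (-x₀) (by rw [norm_neg, hx₀norm]) hnx₀coord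
  have hx₀mem : x₀ ∈ Metric.closedBall (0 : EuclideanSpace ℝ (Fin d)) 1 := by
    rw [Metric.mem_closedBall, dist_zero_right, hx₀norm]; linarith
  have hnx₀mem : -x₀ ∈ Metric.closedBall (0 : EuclideanSpace ℝ (Fin d)) 1 := by
    rw [Metric.mem_closedBall, dist_zero_right, norm_neg, hx₀norm]; linarith
  have h00 : h 0 = 0 := by
    have hcx := hconv.2 hx₀mem hnx₀mem
      (by norm_num : (0:ℝ) ≤ 1/2) (by norm_num : (0:ℝ) ≤ 1/2) (by norm_num : (1:ℝ)/2 + 1/2 = 1)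
    have heq : (1/2 : ℝ) • x₀ + (1/2 : ℝ) • (-x₀) = (0 : EuclideanSpace ℝ (Fin d)) := by
      module
    rw [heq, hzero₁, hzero₂] at hcx
    simp only [smul_eq_mul, mul_zero, add_zero] at hcx
    linarith
  -- step 1 : subgradient at 0
  obtain ⟨p₀, hp₀⟩ := exists_subgradient_at_zero h hconv hcont
  rw [h00] at hp₀
  simp only [zero_add] at hp₀
  -- the normalized function v
  set v : EuclideanSpace ℝ (Fin d) → ℝ := fun x => h x - ⟪p₀, x⟫ with hvdef
  have hinner_cont : Continuous (fun x : EuclideanSpace ℝ (Fin d) => ⟪p₀, x⟫) :=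
    continuous_const.inner continuous_id
  have hvcont : ContinuousOn v (Metric.closedBall (0 : EuclideanSpace ℝ (Fin d)) 1) :=
    hcont.sub hinner_cont.continuousOn
  have hvnonneg_ball : ∀ y ∈ Metric.ball (0 : EuclideanSpace ℝ (Fin d)) 1, 0 ≤ v y := by
    intro y hy
    have := hp₀ y hy
    rw [hvdef]
    simp only
    linarith
  have hvnonneg : ∀ y ∈ Metric.closedBall (0 : EuclideanSpace ℝ (Fin d)) 1, 0 ≤ v y := by
    intro y hy
    rcases lt_or_eq_of_le (by rwa [Metric.mem_closedBall, dist_zero_right] at hy) with hlt | heq1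
    · exact hvnonneg_ball y (by rwa [Metric.mem_ball, dist_zero_right])
    · -- ‖y‖ = 1 : approximate radially
      set ys : ℕ → EuclideanSpace ℝ (Fin d) := fun n => (1 - 1/(n+2 : ℝ)) • y with hys
      have hysmem : ∀ n, ys n ∈ Metric.ball (0 : EuclideanSpace ℝ (Fin d)) 1 := by
        intro n
        rw [Metric.mem_ball, dist_zero_right, hys]
        simp only
        rw [norm_smul, Real.norm_eq_abs]
        have hpos : 0 < 1 - 1/(n+2 : ℝ) := by
          rw [sub_pos, div_lt_one (by positivity)]
          linarith [Nat.cast_nonneg (α := ℝ) n]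
        rw [abs_of_pos hpos, heq1, mul_one]
        have h5 : 0 < 1/(n+2:ℝ) := by positivity
        linarith
      have hystend : Filter.Tendsto ys Filter.atTop (nhds y) := by
        rw [hys]
        have h1 : Filter.Tendsto (fun n : ℕ => 1 - 1/(n+2:ℝ)) Filter.atTop (nhds 1) := by
          have h2 : Filter.Tendsto (fun n : ℕ => 1/(n+2:ℝ)) Filter.atTop (nhds 0) := by
            have hcomp : (fun n : ℕ => 1/((n:ℝ)+2))
                = (fun n : ℕ => 1/((n:ℝ)+1)) ∘ (fun n : ℕ => n + 1) := by
              funext n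
              simp only [Function.comp]
              push_cast
              ring_nf
            rw [hcomp]
            exact tendsto_one_div_add_atTop_nhds_zero_nat.comp (Filter.tendsto_add_atTop_nat 1)
          have := h2.const_sub 1
          simpa using this
        have := h1.smul_const y
        simpa using this
      have hvtend : Filter.Tendsto (fun n => v (ys n)) Filter.atTop (nhds (v y)) := by
        apply (hvcont y hy).tendsto.comp
        apply tendsto_nhdsWithin_of_tendsto_nhds_of_eventually_within _ hystend
        apply Filter.Eventually.of_forall
        intro n
        exact Metric.ball_subset_closedBall (hysmem n)
      exact ge_of_tendsto hvtend (Filter.Eventually.of_forall (fun n => hvnonneg_ball _ (hysmem n)))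
  -- boundedness
  have hcompact : IsCompact (Metric.closedBall (0 : EuclideanSpace ℝ (Fin d)) 1) :=
    isCompact_closedBall _ _
  obtain ⟨z, hz, hzmax⟩ := hcompact.exists_isMaxOn
    ⟨0, by simp⟩ hvcont
  set M₀ : ℝ := max (v z) 0 with hM₀def
  have hM₀ : 0 ≤ M₀ := le_max_right _ _
  have hbound : ∀ y ∈ Metric.closedBall (0 : EuclideanSpace ℝ (Fin d)) 1, v y ≤ M₀ := by
    intro y hy
    exact le_trans (hzmax hy) (le_max_left _ _)
  -- v is convex on the closed ball
  have hvconv : ConvexOn ℝ (Metric.closedBall (0 : EuclideanSpace ℝ (Fin d)) 1) v := by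
    constructor
    · exact hconv.1
    · intro x hx y hy aa bb ha hb hab
      have h1 := hconv.2 hx hy ha hb hab
      rw [hvdef]
      simp only
      rw [inner_add_right, real_inner_smul_right, real_inner_smul_right]
      simp only [smul_eq_mul] at h1 ⊢
      nlinarith [h1]
  -- v vanishes on the whole flat ball of radius r
  set m : ℕ := d - k with hmdef
  have hflatv : ∀ y : EuclideanSpace ℝ (Fin d),
      (∀ i : Fin d, ¬ ((i : ℕ) < m) → y i = 0) → ‖y‖ ≤ r → v y = 0 := by
    intro y hycoord hynorm
    rcases eq_or_ne y 0 with rfl | hyne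
    · rw [hvdef]
      simp [h00]
    · have hynpos : 0 < ‖y‖ := norm_pos_iff.mpr hyne
      set u : EuclideanSpace ℝ (Fin d) := (r/‖y‖) • y with hu
      have hucoord : ∀ i : Fin d, d - k ≤ (i : ℕ) → u i = 0 := by
        intro i hi
        have h1 : u i = (r/‖y‖) * y i := rfl
        rw [h1, hycoord i (by omega), mul_zero]
      have hnucoord : ∀ i : Fin d, d - k ≤ (i : ℕ) → (-u) i = 0 := by
        intro i hi
        have h1 : (-u) i = -(u i) := rfl
        rw [h1, hucoord i hi, neg_zero]
      have hunorm : ‖u‖ = r := by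
        rw [hu, norm_smul, Real.norm_eq_abs, abs_of_pos (by positivity)]
        field_simp
      have hu0 : h u = 0 := hvanish u hunorm hucoord
      have hnu0 : h (-u) = 0 := hvanish (-u) (by rw [norm_neg, hunorm]) hnucoord
      have humem : u ∈ Metric.ball (0 : EuclideanSpace ℝ (Fin d)) 1 := by
        rw [Metric.mem_ball, dist_zero_right, hunorm]; linarith
      have hnumem : -u ∈ Metric.ball (0 : EuclideanSpace ℝ (Fin d)) 1 := by
        rw [Metric.mem_ball, dist_zero_right, norm_neg, hunorm]; linarith
      -- inner product with p₀ vanishes on u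
      have hvu : v u = - ⟪p₀, u⟫ := by rw [hvdef]; simp [hu0]
      have hvnu : v (-u) = ⟪p₀, u⟫ := by
        rw [hvdef]
        simp only [hnu0, inner_neg_right]
        ring
      have hinner0 : ⟪p₀, u⟫ = 0 := by
        have h1 := hvnonneg_ball u humem
        have h2 := hvnonneg_ball (-u) hnumem
        rw [hvu] at h1
        rw [hvnu] at h2
        linarith
      have hvu0 : v u = 0 := by rw [hvu, hinner0, neg_zero]
      have hvnu0 : v (-u) = 0 := by rw [hvnu, hinner0]
      -- convex combination
      set t : ℝ := (1 + ‖y‖/r)/2 with ht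
      have ht0 : 0 ≤ t := by
        rw [ht]
        positivity
      have ht1 : t ≤ 1 := by
        rw [ht]
        have : ‖y‖/r ≤ 1 := by
          rw [div_le_one hr0]
          exact hynorm
        linarith
      have hcomb : t • u + (1 - t) • (-u) = y := by
        have h1 : t • u + (1 - t) • (-u) = (2*t - 1) • u := by
          rw [smul_neg]
          rw [show (2*t-1) • u = t • u - (1-t) • u by rw [sub_smul]; ring_nf; module]
          abel
        rw [h1, ht]
        rw [show (2*((1 + ‖y‖/r)/2) - 1) = ‖y‖/r by ring]
        rw [hu, smul_smul]
        rw [show ‖y‖/r * (r/‖y‖) = 1 by field_simp]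
        rw [one_smul]
      have humem' : u ∈ Metric.closedBall (0 : EuclideanSpace ℝ (Fin d)) 1 :=
        Metric.ball_subset_closedBall humem
      have hnumem' : -u ∈ Metric.closedBall (0 : EuclideanSpace ℝ (Fin d)) 1 :=
        Metric.ball_subset_closedBall hnumem
      have h1 := hvconv.2 humem' hnumem' ht0 (by linarith : (0:ℝ) ≤ 1 - t)
        (by ring : t + (1 - t) = 1)
      rw [hcomb, hvu0, hvnu0] at h1
      simp only [smul_eq_mul, mul_zero, add_zero] at h1
      have h2 : 0 ≤ v y := by
        apply hvnonneg
        rw [Metric.mem_closedBall, dist_zero_right]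
        linarith
      linarith
  -- transfer of the Monge–Ampère bound
  have hMAv : ∀ ω : Set (EuclideanSpace ℝ (Fin d)), MeasurableSet ω →
      ω ⊆ Metric.ball (0 : EuclideanSpace ℝ (Fin d)) 1 →
      ENNReal.ofReal c₀ * volume ω
        ≤ volume (subdiffSet (Metric.ball (0 : EuclideanSpace ℝ (Fin d)) 1) v ω) := by
    intro ω hω hωB
    have htrans : subdiffSet (Metric.ball (0 : EuclideanSpace ℝ (Fin d)) 1) v ω
        = (fun q => q + p₀) ⁻¹'
          (subdiffSet (Metric.ball (0 : EuclideanSpace ℝ (Fin d)) 1) h ω) := by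
      ext p
      simp only [subdiffSet, Set.mem_iUnion, Set.mem_preimage]
      constructor
      · rintro ⟨x, hxω, hpx⟩
        refine ⟨x, hxω, ?_⟩
        intro y hy
        have h1 := hpx y hy
        rw [hvdef] at h1
        simp only at h1
        rw [inner_add_left]
        have h2 : ⟪p₀, y⟫ - ⟪p₀, x⟫ = ⟪p₀, y - x⟫ := (inner_sub_right p₀ y x).symm
        linarith [h1, h2.ge, h2.le]
      · rintro ⟨x, hxω, hpx⟩
        refine ⟨x, hxω, ?_⟩
        intro y hy
        have h1 := hpx y hy
        rw [inner_add_left] at h1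
        rw [hvdef]
        simp only
        have h2 : ⟪p₀, y⟫ - ⟪p₀, x⟫ = ⟪p₀, y - x⟫ := (inner_sub_right p₀ y x).symm
        linarith [h1, h2.ge, h2.le]
    rw [htrans, measure_preimage_add_right]
    exact hMA ω hω hωB
  -- invoke the core lemma
  exact core d k m hk (by omega) (by omega) (by omega) v hvcont M₀ hM₀ hbound hvnonneg
    r hr0 hr1 hflatv c₀ hc₀ hMAv
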